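/- Let R ∈ ℤ with |R| ≥ 2 and B ⊂ ℤ finite with #B = |R|. If for each k ≥ 1 the set B + RB + R²B + ⋯ + R^{k−1}B contains (#B)^k distinct elements, then the attractor T(R,B) = { ∑_{j≥1} R^{−j} b_j : b_j ∈ B } has positive Lebesgue measure. Conversely, if some sum B + RB + ⋯ + R^{k−1}B has fewer than (#B)^k elements, then T(R,B) has Lebesgue measure zero. -/

import Mathlib

open Finset MeasureTheory
open scoped ENNReal

/-- The digit sums `B + RB + ⋯ + R^{k−1}B` as a finset. -/
def digitSums (R : ℤ) (B : Finset ℤ) (k : ℕ) : Finset ℤ :=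
  Finset.image (fun f : Fin k → {x // x ∈ B} => ∑ i : Fin k, R ^ (i : ℕ) * ((f i : ℤ)))
    Finset.univ

/-- The attractor `T(R,B) = { ∑_{j≥1} R^{−j} b_j : b_j ∈ B }`. -/
def attractor (R : ℤ) (B : Finset ℤ) : Set ℝ :=
  {x : ℝ | ∃ b : ℕ → ℤ, (∀ j, b j ∈ B) ∧
    x = ∑' j : ℕ, ((R : ℝ)⁻¹) ^ (j + 1) * (b j : ℝ)}

-- ## Auxiliary lemmas


section
variable (R : ℤ) (B : Finset ℤ)

/-- Bound on the digits. -/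
noncomputable def Mc : ℝ := ∑ b ∈ B, |(b : ℝ)|

lemma Mc_nonneg : 0 ≤ Mc B := Finset.sum_nonneg fun _ _ => abs_nonneg _

lemma abs_le_Mc {b : ℤ} (hb : b ∈ B) : |(b : ℝ)| ≤ Mc B :=
  Finset.single_le_sum (f := fun b : ℤ => |(b : ℝ)|) (fun _ _ => abs_nonneg _) hb

variable {R}

lemma absR_two (hR : 2 ≤ |R|) : (2 : ℝ) ≤ |(R : ℝ)| := by
  rw [← Int.cast_abs]; exact_mod_cast hR

lemma rho_pos (hR : 2 ≤ |R|) : 0 < |(R : ℝ)|⁻¹ := by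
  have := absR_two hR; positivity

lemma rho_le_half (hR : 2 ≤ |R|) : |(R : ℝ)|⁻¹ ≤ 1 / 2 := by
  have h2 := absR_two hR
  rw [inv_le_comm₀ (by linarith) (by norm_num)]
  linarith

lemma rho_lt_one (hR : 2 ≤ |R|) : |(R : ℝ)|⁻¹ < 1 := by
  have := rho_le_half hR; linarith

lemma term_abs (b : ℤ) (j : ℕ) :
    |((R : ℝ)⁻¹) ^ (j + 1) * (b : ℝ)| = (|(R : ℝ)|⁻¹) ^ (j + 1) * |(b : ℝ)| := by
  rw [abs_mul, abs_pow, abs_inv]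

variable {B}

lemma summable_digits (hR : 2 ≤ |R|) {b : ℕ → ℤ} (hb : ∀ j, b j ∈ B) :
    Summable (fun j => ((R : ℝ)⁻¹) ^ (j + 1) * (b j : ℝ)) := by
  set ρ := |(R : ℝ)|⁻¹ with hρ
  apply Summable.of_norm_bounded (g := fun j => (Mc B * ρ) * ρ ^ j)
    ((summable_geometric_of_lt_one (rho_pos hR).le (rho_lt_one hR)).mul_left _)
  intro j
  rw [Real.norm_eq_abs, term_abs]
  calc ρ ^ (j + 1) * |(b j : ℝ)| ≤ ρ ^ (j + 1) * Mc B := by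
        exact mul_le_mul_of_nonneg_left (abs_le_Mc B (hb j)) (by positivity)
    _ = Mc B * ρ * ρ ^ j := by ring

lemma tail_est (hR : 2 ≤ |R|) {b : ℕ → ℤ} (hb : ∀ j, b j ∈ B) (n : ℕ) :
    |(∑' j : ℕ, ((R : ℝ)⁻¹) ^ (j + 1) * (b j : ℝ))
      - ∑ j ∈ Finset.range n, ((R : ℝ)⁻¹) ^ (j + 1) * (b j : ℝ)|
      ≤ Mc B * |(R : ℝ)|⁻¹ ^ n := by
  set ρ := |(R : ℝ)|⁻¹ with hρ
  have hρ0 := rho_pos hR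
  have hρh := rho_le_half hR
  have hsum := summable_digits hR hb
  rw [← hsum.sum_add_tsum_nat_add n, add_sub_cancel_left]
  have h1 : |∑' j : ℕ, ((R : ℝ)⁻¹) ^ ((j + n) + 1) * (b (j + n) : ℝ)|
      ≤ ∑' j : ℕ, (Mc B * ρ ^ (n + 1)) * ρ ^ j := by
    have hnorm : Summable (fun j : ℕ => ‖((R : ℝ)⁻¹) ^ ((j + n) + 1) * (b (j + n) : ℝ)‖) :=
      summable_norm_iff.2 ((summable_nat_add_iff n).2 hsum)
    have key := norm_tsum_le_tsum_norm hnorm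
    simp only [Real.norm_eq_abs] at key hnorm
    refine key.trans ?_
    refine hnorm.tsum_le_tsum (fun j => ?_)
      ((summable_geometric_of_lt_one hρ0.le (rho_lt_one hR)).mul_left _)
    rw [term_abs]
    calc ρ ^ (j + n + 1) * |(b (j + n) : ℝ)| ≤ ρ ^ (j + n + 1) * Mc B :=
          mul_le_mul_of_nonneg_left (abs_le_Mc B (hb _)) (by positivity)
      _ = Mc B * ρ ^ (n + 1) * ρ ^ j := by ring
  refine h1.trans ?_
  rw [tsum_mul_left, tsum_geometric_of_lt_one hρ0.le (rho_lt_one hR)]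
  have h2 : (1 - ρ)⁻¹ ≤ 2 := by
    rw [inv_le_comm₀ (by linarith) (by norm_num)]; linarith
  calc Mc B * ρ ^ (n + 1) * (1 - ρ)⁻¹ ≤ Mc B * ρ ^ (n + 1) * 2 := by
        have : (0:ℝ) ≤ Mc B * ρ ^ (n+1) := by have := Mc_nonneg B; positivity
        exact mul_le_mul_of_nonneg_left h2 this
    _ = Mc B * ρ ^ n * (2 * ρ) := by ring
    _ ≤ Mc B * ρ ^ n * 1 := by
        have : (0:ℝ) ≤ Mc B * ρ ^ n := by have := Mc_nonneg B; positivity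
        exact mul_le_mul_of_nonneg_left (by linarith) this
    _ = Mc B * ρ ^ n := mul_one _

end
section
variable {R : ℤ} {B : Finset ℤ}

lemma partial_eq (hR : 2 ≤ |R|) (b : ℕ → ℤ) (n : ℕ) :
    ∑ j ∈ Finset.range n, ((R : ℝ)⁻¹) ^ (j + 1) * (b j : ℝ)
      = ((R : ℝ) ^ n)⁻¹ * ((∑ i ∈ Finset.range n, R ^ i * b (n - 1 - i) : ℤ) : ℝ) := by
  have hR0 : (R : ℝ) ≠ 0 := by
    intro h
    have : |(R : ℝ)| = 0 := by rw [h, abs_zero]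
    have h2 : (2 : ℝ) ≤ |(R : ℝ)| := by rw [← Int.cast_abs]; exact_mod_cast hR
    linarith
  push_cast
  have h1 : ∑ i ∈ Finset.range n, (R : ℝ) ^ i * (b (n - 1 - i) : ℝ)
      = ∑ j ∈ Finset.range n, (R : ℝ) ^ (n - 1 - j) * (b j : ℝ) := by
    rw [← Finset.sum_range_reflect (fun j => (R : ℝ) ^ (n - 1 - j) * (b j : ℝ)) n]
    refine Finset.sum_congr rfl fun i hi => ?_
    rw [Finset.mem_range] at hi
    congr 2
    omega
  rw [h1, Finset.mul_sum]
  refine Finset.sum_congr rfl fun j hj => ?_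
  rw [Finset.mem_range] at hj
  have hsplit : (R : ℝ) ^ n = (R : ℝ) ^ (n - 1 - j) * (R : ℝ) ^ (j + 1) := by
    rw [← pow_add]; congr 1; omega
  rw [hsplit, mul_inv, inv_pow]
  field_simp
end

section
variable {R : ℤ} {B : Finset ℤ}

lemma mem_digitSums_iff (hB : B.Nonempty) {n : ℕ} {d : ℤ} :
    d ∈ digitSums R B n ↔
      ∃ b : ℕ → ℤ, (∀ j, b j ∈ B) ∧ d = ∑ i ∈ Finset.range n, R ^ i * b i := by
  constructor
  · intro hd
    rw [digitSums, Finset.mem_image] at hd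
    obtain ⟨f, -, hf⟩ := hd
    obtain ⟨b₀, hb₀⟩ := hB
    refine ⟨fun i => if h : i < n then (f ⟨i, h⟩ : ℤ) else b₀, fun j => ?_, ?_⟩
    · by_cases h : j < n
      · simp only [dif_pos h]; exact (f ⟨j, h⟩).2
      · simp only [dif_neg h]; exact hb₀
    · rw [← hf, ← Fin.sum_univ_eq_sum_range
        (fun i => R ^ i * (if h : i < n then (f ⟨i, h⟩ : ℤ) else b₀)) n]
      refine Finset.sum_congr rfl fun i _ => ?_
      simp [i.isLt]
  · rintro ⟨b, hb, rfl⟩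
    rw [digitSums, Finset.mem_image]
    refine ⟨fun i => ⟨b i, hb i⟩, Finset.mem_univ _, ?_⟩
    rw [← Fin.sum_univ_eq_sum_range (fun i => R ^ i * b i) n]

lemma card_digitSums_le {n : ℕ} : (digitSums R B n).card ≤ B.card ^ n := by
  refine (Finset.card_image_le).trans ?_
  simp [Finset.card_univ]

section
variable {R : ℤ} {B : Finset ℤ}

/-- Every point of the attractor is close to a rescaled digit sum. -/
lemma attractor_near (hR : 2 ≤ |R|) (hB : B.Nonempty) {x : ℝ}
    (hx : x ∈ attractor R B) (n : ℕ) :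
    ∃ d ∈ digitSums R B n, |x - ((R : ℝ) ^ n)⁻¹ * (d : ℝ)| ≤ Mc B * |(R : ℝ)|⁻¹ ^ n := by
  obtain ⟨b, hb, rfl⟩ := hx
  refine ⟨∑ i ∈ Finset.range n, R ^ i * b (n - 1 - i),
    (mem_digitSums_iff hB).2 ⟨fun i => b (n - 1 - i), fun i => hb _, rfl⟩, ?_⟩
  rw [← partial_eq hR b n]
  exact tail_est hR hb n

/-- Every rescaled digit sum is close to a point of the attractor. -/
lemma near_attractor (hR : 2 ≤ |R|) (hB : B.Nonempty) {n : ℕ} {d : ℤ}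
    (hd : d ∈ digitSums R B n) :
    ∃ x ∈ attractor R B, |x - ((R : ℝ) ^ n)⁻¹ * (d : ℝ)| ≤ Mc B * |(R : ℝ)|⁻¹ ^ n := by
  obtain ⟨b, hb, rfl⟩ := (mem_digitSums_iff hB).1 hd
  obtain ⟨b₀, hb₀⟩ := hB
  set b' : ℕ → ℤ := fun j => if j < n then b (n - 1 - j) else b₀ with hb'
  have hb'mem : ∀ j, b' j ∈ B := by
    intro j; by_cases h : j < n <;> simp only [hb', if_pos, if_neg, h, if_true, if_false]
    exacts [hb _, hb₀]
  refine ⟨∑' j : ℕ, ((R : ℝ)⁻¹) ^ (j + 1) * (b' j : ℝ), ⟨b', hb'mem, rfl⟩, ?_⟩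
  have heq : ((∑ i ∈ Finset.range n, R ^ i * b i : ℤ) : ℝ)
      = ((∑ i ∈ Finset.range n, R ^ i * b' (n - 1 - i) : ℤ) : ℝ) := by
    congr 1
    refine Finset.sum_congr rfl fun i hi => ?_
    rw [Finset.mem_range] at hi
    have h1 : n - 1 - i < n := by omega
    have h2 : n - 1 - (n - 1 - i) = i := by omega
    rw [hb']; simp only [if_pos h1, h2]
  rw [heq, ← partial_eq hR b' n]
  exact tail_est hR hb'mem n

/-- The attractor is compact. -/
lemma isCompact_attractor (hR : 2 ≤ |R|) : IsCompact (attractor R B) := by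
  set Φ : (ℕ → {x // x ∈ B}) → ℝ :=
    fun f => ∑' j : ℕ, ((R : ℝ)⁻¹) ^ (j + 1) * ((f j : ℤ) : ℝ) with hΦ
  have hrange : attractor R B = Set.range Φ := by
    ext x
    constructor
    · rintro ⟨b, hb, rfl⟩
      exact ⟨fun j => ⟨b j, hb j⟩, rfl⟩
    · rintro ⟨f, rfl⟩
      exact ⟨fun j => (f j : ℤ), fun j => (f j).2, rfl⟩
  rw [hrange]
  refine isCompact_range ?_
  refine continuous_tsum (u := fun j => (Mc B * |(R : ℝ)|⁻¹) * |(R : ℝ)|⁻¹ ^ j)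
    (fun j => ?_) ((summable_geometric_of_lt_one (rho_pos hR).le (rho_lt_one hR)).mul_left _)
    (fun j f => ?_)
  · exact continuous_const.mul
      ((continuous_of_discreteTopology (α := {x // x ∈ B}) (f := fun s => ((s : ℤ) : ℝ))).comp
        (continuous_apply j))
  · rw [Real.norm_eq_abs, term_abs]
    calc |(R:ℝ)|⁻¹ ^ (j + 1) * |((f j : ℤ) : ℝ)| ≤ |(R:ℝ)|⁻¹ ^ (j + 1) * Mc B :=
          mul_le_mul_of_nonneg_left (abs_le_Mc B (f j).2) (by positivity)
      _ = Mc B * |(R:ℝ)|⁻¹ * |(R:ℝ)|⁻¹ ^ j := by ring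

end

section
variable {R : ℤ} {B : Finset ℤ}

lemma one_le_volume_cthickening (hR : 2 ≤ |R|) (hcard : B.card = R.natAbs)
    (hB : B.Nonempty)
    (H : ∀ k : ℕ, 1 ≤ k → (digitSums R B k).card = B.card ^ k)
    (n : ℕ) (hn : 1 ≤ n) :
    1 ≤ volume (Metric.cthickening ((Mc B + 1) * |(R : ℝ)|⁻¹ ^ n) (attractor R B)) := by
  set ρ := |(R : ℝ)|⁻¹ with hρdef
  have hρ0 := rho_pos hR
  set c : ℤ → ℝ := fun d => ((R : ℝ) ^ n)⁻¹ * (d : ℝ) with hc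
  have habs : |((R : ℝ) ^ n)⁻¹| = ρ ^ n := by rw [abs_inv, abs_pow, inv_pow]
  set g : ℤ → Set ℝ := fun d => Set.Ico (c d) (c d + ρ ^ n) with hg
  -- each interval is inside the thickening
  have key1 : ∀ d ∈ digitSums R B n, g d ⊆
      Metric.cthickening ((Mc B + 1) * ρ ^ n) (attractor R B) := by
    intro d hd y hy
    obtain ⟨x, hx, hdist⟩ := near_attractor hR hB hd
    refine Metric.mem_cthickening_of_dist_le y x _ _ hx ?_
    rw [Real.dist_eq]
    have h1 : c d ≤ y := hy.1
    have h2 : y < c d + ρ ^ n := hy.2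
    have : |y - x| ≤ |y - c d| + |x - c d| := by
      rw [abs_sub_comm x (c d)]
      calc |y - x| = |(y - c d) + (c d - x)| := by ring_nf
        _ ≤ |y - c d| + |c d - x| := abs_add_le _ _
    refine this.trans ?_
    have h3 : |y - c d| ≤ ρ ^ n := by rw [abs_of_nonneg (by linarith)]; linarith
    calc |y - c d| + |x - c d| ≤ ρ ^ n + Mc B * ρ ^ n := add_le_add h3 hdist
      _ = (Mc B + 1) * ρ ^ n := by ring
  -- disjointness
  have key2 : (↑(digitSums R B n) : Set ℤ).PairwiseDisjoint g := by
    intro d hd e he hde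
    rw [Function.onFun, Set.disjoint_left]
    intro y hyd hye
    have hsep : ρ ^ n ≤ |c d - c e| := by
      rw [hc]
      have : ((R:ℝ)^n)⁻¹ * d - ((R:ℝ)^n)⁻¹ * e = ((R:ℝ)^n)⁻¹ * ((d : ℝ) - e) := by ring
      rw [this, abs_mul, habs]
      have h1 : (1:ℝ) ≤ |(d : ℝ) - (e : ℝ)| := by
        have : d - e ≠ 0 := sub_ne_zero.2 hde
        have h2 : 1 ≤ |d - e| := Int.one_le_abs this
        calc (1:ℝ) = ((1:ℤ):ℝ) := by norm_num
          _ ≤ ((|d - e| : ℤ) : ℝ) := by exact_mod_cast h2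
          _ = |(d:ℝ) - e| := by push_cast [Int.cast_abs]; ring_nf
      nlinarith [pow_pos hρ0 n]
    have h4 : |c d - c e| < ρ ^ n := by
      have p1 := hyd.1; have p2 := hyd.2; have p3 := hye.1; have p4 := hye.2
      rw [abs_sub_lt_iff]
      constructor <;> linarith
    linarith
  -- measure computation
  have hvol : volume (⋃ d ∈ digitSums R B n, g d)
      = ∑ d ∈ digitSums R B n, volume (g d) :=
    measure_biUnion_finset key2 (fun d _ => measurableSet_Ico)
  have hIco : ∀ d : ℤ, volume (g d) = ENNReal.ofReal (ρ ^ n) := by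
    intro d; rw [hg]; simp [Real.volume_Ico]
  have hcardn : (digitSums R B n).card = R.natAbs ^ n := by rw [H n hn, hcard]
  have hval : (∑ d ∈ digitSums R B n, volume (g d)) = 1 := by
    rw [Finset.sum_congr rfl (fun d _ => hIco d), Finset.sum_const, hcardn,
      nsmul_eq_mul]
    rw [← ENNReal.ofReal_natCast, ← ENNReal.ofReal_mul (by positivity)]
    have : ((R.natAbs ^ n : ℕ) : ℝ) * ρ ^ n = 1 := by
      have hna : ((R.natAbs : ℕ) : ℝ) = |(R : ℝ)| := by
        simp [Nat.cast_natAbs]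
      have h0 : (0 : ℝ) < |(R : ℝ)| := by have := absR_two hR; linarith
      push_cast [hna]
      rw [hρdef, inv_pow, mul_inv_cancel₀ (pow_pos h0 n).ne']
    rw [this, ENNReal.ofReal_one]
  calc (1 : ℝ≥0∞) = ∑ d ∈ digitSums R B n, volume (g d) := hval.symm
    _ = volume (⋃ d ∈ digitSums R B n, g d) := hvol.symm
    _ ≤ volume (Metric.cthickening ((Mc B + 1) * ρ ^ n) (attractor R B)) :=
        measure_mono (Set.iUnion₂_subset key1)

end

section
variable {R : ℤ} {B : Finset ℤ}

lemma digitSums_card_mul (hB : B.Nonempty) (k : ℕ) (m : ℕ) :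
    (digitSums R B (m * k)).card ≤ (digitSums R B k).card ^ m := by
  induction m with
  | zero =>
      simpa using (card_digitSums_le (R := R) (B := B) (n := 0))
  | succ m ih =>
      have hsub : digitSums R B (m * k + k) ⊆
          Finset.image₂ (fun x y => x + R ^ (m * k) * y)
            (digitSums R B (m * k)) (digitSums R B k) := by
        intro d hd
        obtain ⟨b, hb, rfl⟩ := (mem_digitSums_iff hB).1 hd
        rw [Finset.mem_image₂]
        refine ⟨∑ i ∈ Finset.range (m * k), R ^ i * b i,
          (mem_digitSums_iff hB).2 ⟨b, hb, rfl⟩,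
          ∑ i ∈ Finset.range k, R ^ i * b (m * k + i),
          (mem_digitSums_iff hB).2 ⟨fun i => b (m * k + i), fun i => hb _, rfl⟩, ?_⟩
        rw [Finset.sum_range_add, Finset.mul_sum]
        congr 1
        refine Finset.sum_congr rfl fun i _ => ?_
        rw [pow_add]; ring
      calc (digitSums R B ((m + 1) * k)).card
          = (digitSums R B (m * k + k)).card := by rw [add_mul, one_mul]
        _ ≤ (digitSums R B (m * k)).card * (digitSums R B k).card :=
            (Finset.card_le_card hsub).trans (Finset.card_image₂_le _ _ _)
        _ ≤ (digitSums R B k).card ^ m * (digitSums R B k).card :=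
            Nat.mul_le_mul_right _ ih
        _ = (digitSums R B k).card ^ (m + 1) := by rw [pow_succ]

lemma volume_attractor_le (hR : 2 ≤ |R|) (hB : B.Nonempty) (n : ℕ) :
    volume (attractor R B) ≤
      (digitSums R B n).card • ENNReal.ofReal (2 * (Mc B * |(R : ℝ)|⁻¹ ^ n)) := by
  have hcover : attractor R B ⊆
      ⋃ d ∈ digitSums R B n,
        Metric.closedBall (((R : ℝ) ^ n)⁻¹ * (d : ℝ)) (Mc B * |(R : ℝ)|⁻¹ ^ n) := by
    intro x hx
    obtain ⟨d, hd, hdist⟩ := attractor_near hR hB hx n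
    exact Set.mem_biUnion hd (by rwa [Metric.mem_closedBall, Real.dist_eq])
  calc volume (attractor R B)
      ≤ ∑ d ∈ digitSums R B n,
          volume (Metric.closedBall (((R : ℝ) ^ n)⁻¹ * (d : ℝ)) (Mc B * |(R : ℝ)|⁻¹ ^ n)) :=
        (measure_mono hcover).trans (measure_biUnion_finset_le _ _)
    _ = (digitSums R B n).card • ENNReal.ofReal (2 * (Mc B * |(R : ℝ)|⁻¹ ^ n)) := by
        rw [Finset.sum_congr rfl (fun d _ => Real.volume_closedBall _ _), Finset.sum_const]

end

/-- Kenyon–Lagarias–Wang criterion (i) ⟺ (ii) in dimension one: for `|R| ≥ 2` and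
`#B = |R|`, the attractor `T(R,B)` has positive Lebesgue measure iff every digit sum
`B + RB + ⋯ + R^{k−1}B` has `(#B)^k` distinct elements; if some digit sum has fewer
elements, then `T(R,B)` is Lebesgue-null. -/
theorem klw_criterion (R : ℤ) (hR : 2 ≤ |R|) (B : Finset ℤ) (hcard : B.card = R.natAbs) :
    ((∀ k : ℕ, 1 ≤ k → (digitSums R B k).card = B.card ^ k) →
      0 < volume (attractor R B)) ∧
    ((∃ k : ℕ, 1 ≤ k ∧ (digitSums R B k).card < B.card ^ k) →
      volume (attractor R B) = 0) := by
  have hna : ((R.natAbs : ℕ) : ℝ) = |(R : ℝ)| := by simp [Nat.cast_natAbs]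
  have h0 : (0 : ℝ) < |(R : ℝ)| := by have := absR_two hR; linarith
  have hB : B.Nonempty := by
    rw [← Finset.card_pos, hcard]
    have h2 : (2 : ℤ) ≤ (R.natAbs : ℤ) := by rwa [Int.abs_eq_natAbs] at hR
    omega
  have hρ0 := rho_pos hR
  have hρ1 := rho_lt_one hR
  constructor
  · -- positive measure direction
    intro H
    have hcomp := isCompact_attractor (B := B) hR
    have htend := tendsto_measure_cthickening_of_isCompact (μ := volume) hcomp
    have hεtend : Filter.Tendsto (fun m : ℕ => (Mc B + 1) * |(R : ℝ)|⁻¹ ^ (m + 1))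
        Filter.atTop (nhds 0) := by
      have h1 := tendsto_pow_atTop_nhds_zero_of_lt_one hρ0.le hρ1
      have h2 := h1.const_mul ((Mc B + 1) * |(R : ℝ)|⁻¹)
      simp only [mul_zero] at h2
      refine h2.congr fun m => by ring
    have hcomp2 := htend.comp hεtend
    have h1le : (1 : ℝ≥0∞) ≤ volume (attractor R B) :=
      ge_of_tendsto hcomp2 (Filter.Eventually.of_forall fun m =>
        one_le_volume_cthickening hR hcard hB H (m + 1) (by omega))
    exact lt_of_lt_of_le (by norm_num) h1le
  · -- measure zero direction
    rintro ⟨k, hk, hlt⟩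
    set c := (digitSums R B k).card with hcdef
    set q : ℝ := (c : ℝ) * (|(R : ℝ)|⁻¹) ^ k with hq
    have hq0 : 0 ≤ q := by positivity
    have hq1 : q < 1 := by
      rw [hq, inv_pow, ← div_eq_mul_inv, div_lt_one (pow_pos h0 k)]
      calc (c : ℝ) < ((B.card ^ k : ℕ) : ℝ) := by exact_mod_cast hlt
        _ = |(R : ℝ)| ^ k := by rw [hcard]; push_cast [hna]; ring
    have hbound : ∀ m : ℕ, volume (attractor R B) ≤ ENNReal.ofReal (2 * Mc B * q ^ m) := by
      intro m
      refine (volume_attractor_le hR hB (m * k)).trans ?_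
      rw [nsmul_eq_mul, ← ENNReal.ofReal_natCast, ← ENNReal.ofReal_mul (Nat.cast_nonneg _)]
      apply ENNReal.ofReal_le_ofReal
      have hcm : (((digitSums R B (m * k)).card : ℕ) : ℝ) ≤ (c : ℝ) ^ m := by
        exact_mod_cast digitSums_card_mul hB k m
      have hM := Mc_nonneg B
      have hrpos : (0 : ℝ) ≤ 2 * (Mc B * |(R : ℝ)|⁻¹ ^ (m * k)) := by positivity
      have hpow : (|(R : ℝ)|⁻¹) ^ (m * k) = ((|(R : ℝ)|⁻¹) ^ k) ^ m := by
        rw [mul_comm, pow_mul]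
      calc (((digitSums R B (m * k)).card : ℕ) : ℝ) * (2 * (Mc B * |(R : ℝ)|⁻¹ ^ (m * k)))
          ≤ (c : ℝ) ^ m * (2 * (Mc B * |(R : ℝ)|⁻¹ ^ (m * k))) :=
            mul_le_mul_of_nonneg_right hcm hrpos
        _ = 2 * Mc B * q ^ m := by rw [hq, mul_pow, hpow]; ring
    have htend0 : Filter.Tendsto (fun m : ℕ => ENNReal.ofReal (2 * Mc B * q ^ m))
        Filter.atTop (nhds 0) := by
      have hreal : Filter.Tendsto (fun m : ℕ => 2 * Mc B * q ^ m) Filter.atTop (nhds 0) := by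
        have := (tendsto_pow_atTop_nhds_zero_of_lt_one hq0 hq1).const_mul (2 * Mc B)
        simpa using this
      have := ENNReal.tendsto_ofReal hreal
      simpa using this
    exact le_zero_iff.mp (ge_of_tendsto htend0 (Filter.Eventually.of_forall hbound))
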